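/- For an integer N ≥ 2, the Fourier matrix F_N has minimal defect, d(F_N) = 2N−1, if and only if N is prime. -/

import Mathlib

noncomputable def defectSubmodule {I J : Type*} [Fintype I] [Fintype J]
    (H : Matrix I J ℂ) : Submodule ℝ (Matrix I J ℝ) where
  carrier := {A | ∀ i j, ∑ k, H i k * star (H j k) * ((A i k : ℂ) - (A j k : ℂ)) = 0}
  zero_mem' := by intro i j; simp
  add_mem' := by
    intro A B hA hB i j
    have h : ∀ k ∈ Finset.univ, H i k * star (H j k) * (((A + B) i k : ℂ) - (((A + B) j k : ℝ) : ℂ))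
        = H i k * star (H j k) * ((A i k : ℂ) - (A j k : ℂ))
          + H i k * star (H j k) * ((B i k : ℂ) - (B j k : ℂ)) := by
      intro k _
      simp only [Matrix.add_apply]
      push_cast
      ring
    rw [Finset.sum_congr rfl h, Finset.sum_add_distrib, hA i j, hB i j, add_zero]
  smul_mem' := by
    intro c A hA i j
    have h : ∀ k ∈ Finset.univ, H i k * star (H j k) * (((c • A) i k : ℂ) - (((c • A) j k : ℝ) : ℂ))
        = (c : ℂ) * (H i k * star (H j k) * ((A i k : ℂ) - (A j k : ℂ))) := by
      intro k _
      simp only [Matrix.smul_apply, smul_eq_mul]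
      push_cast
      ring
    rw [Finset.sum_congr rfl h, ← Finset.mul_sum, hA i j, mul_zero]

noncomputable def defect {I J : Type*} [Fintype I] [Fintype J] (H : Matrix I J ℂ) : ℕ :=
  Module.finrank ℝ (defectSubmodule H)

/-- The Fourier matrix `F_N = (w^{ij})` with `w = e^{2πi/N}`. -/
noncomputable def FourierMatrix (N : ℕ) : Matrix (Fin N) (Fin N) ℂ :=
  Matrix.of fun i j => Complex.exp (2 * Real.pi * Complex.I / N) ^ ((i : ℕ) * (j : ℕ))


noncomputable def ww (N : ℕ) : ℂ := Complex.exp (2 * Real.pi * Complex.I / N)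

lemma ww_prim (N : ℕ) (hN : N ≠ 0) : IsPrimitiveRoot (ww N) N :=
  Complex.isPrimitiveRoot_exp N hN

lemma ww_pow_congr (N : ℕ) (hN : N ≠ 0) {a b : ℕ} (h : a ≡ b [MOD N]) :
    ww N ^ a = ww N ^ b := by
  have h1 : ww N ^ N = 1 := (ww_prim N hN).pow_eq_one
  have key : ∀ m : ℕ, ww N ^ m = ww N ^ (m % N) := by
    intro m
    conv_lhs => rw [← Nat.mod_add_div m N]
    rw [pow_add, pow_mul, h1, one_pow, mul_one]
  rw [key a, key b]
  exact congrArg _ h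

noncomputable def ee (N : ℕ) (d : ZMod N) : ℂ := ww N ^ d.val

lemma ee_add (N : ℕ) [NeZero N] (a b : ZMod N) : ee N (a + b) = ee N a * ee N b := by
  rw [ee, ee, ee, ← pow_add]
  exact ww_pow_congr N (NeZero.ne N) (by rw [ZMod.val_add]; exact (Nat.mod_modEq _ N))

lemma ee_zero (N : ℕ) [NeZero N] : ee N 0 = 1 := by
  rw [ee, ZMod.val_zero, pow_zero]

lemma ee_mul_ee_neg (N : ℕ) [NeZero N] (a : ZMod N) : ee N a * ee N (-a) = 1 := by
  rw [← ee_add, add_neg_cancel, ee_zero]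

lemma ee_ne_zero (N : ℕ) [NeZero N] (a : ZMod N) : ee N a ≠ 0 :=
  left_ne_zero_of_mul_eq_one (ee_mul_ee_neg N a)

lemma ee_neg (N : ℕ) [NeZero N] (a : ZMod N) : ee N (-a) = (ee N a)⁻¹ :=
  eq_inv_of_mul_eq_one_left (by rw [mul_comm]; exact ee_mul_ee_neg N a)

lemma star_ww (N : ℕ) : star (ww N) = (ww N)⁻¹ := by
  rw [ww, Complex.star_def, ← Complex.exp_conj, ← Complex.exp_neg]
  congr 1
  simp [Complex.ext_iff, neg_div]

lemma star_ee (N : ℕ) [NeZero N] (a : ZMod N) : star (ee N a) = ee N (-a) := by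
  rw [ee, star_pow, star_ww, inv_pow, ← ee, ee_neg]

noncomputable def zEquiv (N : ℕ) [NeZero N] : Fin N ≃ ZMod N where
  toFun i := ((i : ℕ) : ZMod N)
  invFun x := ⟨x.val, x.val_lt⟩
  left_inv i := by ext; simp [ZMod.val_cast_of_lt i.isLt]
  right_inv x := by simp [ZMod.natCast_rightInverse x]

lemma zEquiv_symm_val (N : ℕ) [NeZero N] (x : ZMod N) :
    (((zEquiv N).symm x : Fin N) : ℕ) = x.val := rfl

lemma sum_ee (N : ℕ) [NeZero N] (d : ZMod N) :
    ∑ k : ZMod N, ee N (d * k) = if d = 0 then (N : ℂ) else 0 := by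
  by_cases hd : d = 0
  · simp [hd, ee_zero, ZMod.card]
  · simp only [hd, if_false]
    set z : ℂ := ww N ^ d.val with hz
    have hz1 : z ≠ 1 := (ww_prim N (NeZero.ne N)).pow_ne_one_of_pos_of_lt
      (fun h => hd (by rwa [← ZMod.val_eq_zero])) d.val_lt
    have hzN : z ^ N = 1 := by
      rw [hz, ← pow_mul, mul_comm, pow_mul, (ww_prim N (NeZero.ne N)).pow_eq_one, one_pow]
    have hterm : ∀ k : ZMod N, ee N (d * k) = z ^ k.val := by
      intro k
      rw [ee, hz, ← pow_mul]
      exact ww_pow_congr N (NeZero.ne N) (by rw [ZMod.val_mul]; exact Nat.mod_modEq _ N)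
    rw [Finset.sum_congr rfl (fun k _ => hterm k)]
    rw [← Fintype.sum_equiv (zEquiv N) _ (fun k : ZMod N => z ^ k.val) (fun i => rfl)]
    have : ∀ i : Fin N, z ^ ((zEquiv N) i).val = z ^ (i : ℕ) := by
      intro i
      congr 1
      exact ZMod.val_cast_of_lt i.isLt
    rw [Finset.sum_congr rfl (fun i _ => this i), Fin.sum_univ_eq_sum_range (fun m => z ^ m) N,
      geom_sum_eq hz1, hzN, sub_self, zero_div]

lemma inversion (N : ℕ) [NeZero N] (g : ZMod N → ℂ)
    (h : ∀ d : ZMod N, d ≠ 0 → ∑ k : ZMod N, ee N (d * k) * g k = 0) (x y : ZMod N) :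
    g x = g y := by
  have key : ∀ x : ZMod N, (N : ℂ) * g x = ∑ k : ZMod N, g k := by
    intro x
    have L : ∑ d : ZMod N, ee N (-(d * x)) * ∑ k : ZMod N, ee N (d * k) * g k
        = ∑ k : ZMod N, g k := by
      rw [Finset.sum_eq_single (0 : ZMod N)]
      · simp [ee_zero]
      · intro d _ hd; rw [h d hd, mul_zero]
      · simp
    have R : ∑ d : ZMod N, ee N (-(d * x)) * ∑ k : ZMod N, ee N (d * k) * g k
        = (N : ℂ) * g x := by
      calc ∑ d : ZMod N, ee N (-(d * x)) * ∑ k : ZMod N, ee N (d * k) * g k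
          = ∑ d : ZMod N, ∑ k : ZMod N, ee N ((k - x) * d) * g k := by
            refine Finset.sum_congr rfl fun d _ => ?_
            rw [Finset.mul_sum]
            refine Finset.sum_congr rfl fun k _ => ?_
            have harg : (k - x) * d = d * k + -(d * x) := by ring
            rw [harg, ee_add]; ring
        _ = ∑ k : ZMod N, ∑ d : ZMod N, ee N ((k - x) * d) * g k := Finset.sum_comm
        _ = ∑ k : ZMod N, (if k - x = 0 then (N : ℂ) else 0) * g k := by
            refine Finset.sum_congr rfl fun k _ => ?_
            rw [← Finset.sum_mul, sum_ee]
        _ = (N : ℂ) * g x := by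
            rw [Finset.sum_eq_single x]
            · simp
            · intro k _ hk
              rw [if_neg (sub_ne_zero.mpr hk), zero_mul]
            · simp
    rw [← R, L]
  have hN0 : (N : ℂ) ≠ 0 := Nat.cast_ne_zero.mpr (NeZero.ne N)
  have hxy := (key x).trans (key y).symm
  exact mul_left_cancel₀ hN0 hxy

lemma fourier_entry (N : ℕ) [NeZero N] (i k : Fin N) :
    FourierMatrix N i k = ee N (zEquiv N i * zEquiv N k) := by
  show ww N ^ ((i : ℕ) * (k : ℕ)) = ww N ^ (((zEquiv N i) * (zEquiv N k)).val)
  refine ww_pow_congr N (NeZero.ne N) ?_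
  have : ((zEquiv N i) * (zEquiv N k)).val = ((i : ℕ) * (k : ℕ)) % N := by
    show ((((i : ℕ) : ZMod N)) * (((k : ℕ) : ZMod N))).val = _
    rw [ZMod.val_mul, ZMod.val_cast_of_lt i.isLt, ZMod.val_cast_of_lt k.isLt]
  rw [this]
  exact (Nat.mod_modEq _ N).symm

lemma coeff (N : ℕ) [NeZero N] (i j k : Fin N) :
    FourierMatrix N i k * star (FourierMatrix N j k)
      = ee N ((zEquiv N i - zEquiv N j) * zEquiv N k) := by
  rw [fourier_entry, fourier_entry, star_ee, ← ee_add]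
  congr 1
  ring

lemma mem_iff (N : ℕ) [NeZero N] (A : Matrix (Fin N) (Fin N) ℝ) :
    A ∈ defectSubmodule (FourierMatrix N) ↔
    ∀ x y : ZMod N, ∑ k : ZMod N, ee N ((x - y) * k) *
      ((A ((zEquiv N).symm x) ((zEquiv N).symm k) : ℂ)
        - (A ((zEquiv N).symm y) ((zEquiv N).symm k) : ℂ)) = 0 := by
  have key : ∀ i j : Fin N,
      ∑ k, FourierMatrix N i k * star (FourierMatrix N j k) * ((A i k : ℂ) - (A j k : ℂ))
      = ∑ k : ZMod N, ee N ((zEquiv N i - zEquiv N j) * k) *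
        ((A ((zEquiv N).symm (zEquiv N i)) ((zEquiv N).symm k) : ℂ)
          - (A ((zEquiv N).symm (zEquiv N j)) ((zEquiv N).symm k) : ℂ)) := by
    intro i j
    refine Fintype.sum_equiv (zEquiv N) _ _ fun k => ?_
    rw [coeff]
    simp [Equiv.symm_apply_apply]
  constructor
  · intro hA x y
    have h2 := hA ((zEquiv N).symm x) ((zEquiv N).symm y)
    rw [key] at h2
    simpa using h2
  · intro hA i j
    rw [key]
    simpa using hA (zEquiv N i) (zEquiv N j)

noncomputable def phi (N : ℕ) : ((Fin N → ℝ) × (Fin N → ℝ)) →ₗ[ℝ] Matrix (Fin N) (Fin N) ℝ where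
  toFun p := Matrix.of fun i k => p.1 i + p.2 k
  map_add' p q := by ext i k; simp [Matrix.add_apply]; ring
  map_smul' c p := by ext i k; simp [Matrix.smul_apply]; ring

noncomputable def TT (N : ℕ) : Submodule ℝ (Matrix (Fin N) (Fin N) ℝ) := LinearMap.range (phi N)

lemma finrank_TT (N : ℕ) [NeZero N] : Module.finrank ℝ (TT N) = 2 * N - 1 := by
  have i0 : Fin N := ⟨0, Nat.pos_of_ne_zero (NeZero.ne N)⟩
  set u : (Fin N → ℝ) × (Fin N → ℝ) := (fun _ => (1 : ℝ), fun _ => (-1 : ℝ)) with hu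
  have hker : LinearMap.ker (phi N) = Submodule.span ℝ {u} := by
    ext p
    rw [LinearMap.mem_ker, Submodule.mem_span_singleton]
    constructor
    · intro hp
      have hpik : ∀ i k, p.1 i + p.2 k = 0 := by
        intro i k
        have := congrFun (congrFun hp i) k
        simpa [phi] using this
      refine ⟨p.1 i0, ?_⟩
      have h1 : ∀ i, p.1 i = p.1 i0 := by
        intro i
        have a := hpik i i0
        have b := hpik i0 i0
        linarith
      have h2 : ∀ k, p.2 k = -(p.1 i0) := by
        intro k
        have := hpik i0 k
        linarith
      refine Prod.ext ?_ ?_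
      · funext i; simp [hu, (h1 i)]
      · funext k; simp [hu, (h2 k)]
    · rintro ⟨a, rfl⟩
      ext i k
      simp [hu, phi]
  have hu0 : u ≠ 0 := by
    intro h
    have := congrFun (congrArg Prod.fst h) i0
    simpa [hu] using this
  have hrank := LinearMap.finrank_range_add_finrank_ker (phi N)
  rw [hker, finrank_span_singleton hu0, Module.finrank_prod, Module.finrank_pi,
    Fintype.card_fin] at hrank
  have : Module.finrank ℝ (TT N) + 1 = N + N := hrank
  omega

lemma sum_coeff (N : ℕ) [NeZero N] {i j : Fin N} (hij : i ≠ j) :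
    ∑ k : Fin N, FourierMatrix N i k * star (FourierMatrix N j k) = 0 := by
  have h : ∑ k : Fin N, FourierMatrix N i k * star (FourierMatrix N j k)
      = ∑ k : ZMod N, ee N ((zEquiv N i - zEquiv N j) * k) :=
    Fintype.sum_equiv (zEquiv N) _ _ fun k => coeff N i j k
  rw [h, sum_ee, if_neg]
  exact sub_ne_zero.mpr (fun h' => hij ((zEquiv N).injective h'))

lemma TT_le (N : ℕ) [NeZero N] : TT N ≤ defectSubmodule (FourierMatrix N) := by
  rintro A ⟨p, rfl⟩
  intro i j
  by_cases hij : i = j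
  · subst hij; simp
  · have hterm : ∀ k : Fin N, FourierMatrix N i k * star (FourierMatrix N j k) *
        (((phi N p) i k : ℂ) - ((phi N p) j k : ℂ))
        = (FourierMatrix N i k * star (FourierMatrix N j k)) * ((p.1 i : ℂ) - (p.1 j : ℂ)) := by
      intro k
      show _ * (((p.1 i + p.2 k : ℝ) : ℂ) - ((p.1 j + p.2 k : ℝ) : ℂ)) = _
      push_cast
      ring
    rw [Finset.sum_congr rfl (fun k _ => hterm k), ← Finset.sum_mul, sum_coeff N hij, zero_mul]

lemma S_le_TT (N : ℕ) [NeZero N] (hp : N.Prime) :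
    defectSubmodule (FourierMatrix N) ≤ TT N := by
  haveI : Fact N.Prime := ⟨hp⟩
  intro A hA
  rw [mem_iff] at hA
  set Ac : ZMod N → ZMod N → ℂ :=
    fun x k => ((A ((zEquiv N).symm x) ((zEquiv N).symm k) : ℝ) : ℂ) with hAc
  set F : ZMod N → ZMod N → ℂ := fun x d => ∑ k : ZMod N, ee N (d * k) * Ac x k with hF
  have step : ∀ y d : ZMod N, F (y + d) d = F y d := by
    intro y d
    have h1 := hA (y + d) y
    rw [add_sub_cancel_left] at h1
    have expand : ∑ k : ZMod N, ee N (d * k) * (Ac (y + d) k - Ac y k)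
        = F (y + d) d - F y d := by
      rw [hF]
      simp only []
      rw [← Finset.sum_sub_distrib]
      exact Finset.sum_congr rfl fun k _ => by ring
    rw [expand] at h1
    exact sub_eq_zero.mp h1
  have iter : ∀ (t : ℕ) (y d : ZMod N), F (y + t • d) d = F y d := by
    intro t
    induction t with
    | zero => intro y d; simp
    | succ n ih =>
      intro y d
      have h2 : y + (n + 1) • d = (y + n • d) + d := by rw [succ_nsmul]; ring
      rw [h2, step, ih]
  have Fconst : ∀ (d : ZMod N), d ≠ 0 → ∀ x, F x d = F 0 d := by
    intro d hd x
    have h3 : (0 : ZMod N) + ((x * d⁻¹).val) • d = x := by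
      rw [zero_add, nsmul_eq_mul, ZMod.natCast_rightInverse (x * d⁻¹), mul_assoc,
        inv_mul_cancel₀ hd, mul_one]
    have := iter ((x * d⁻¹).val) 0 d
    rw [h3] at this
    exact this
  have gconst : ∀ x k : ZMod N, Ac x k - Ac 0 k = Ac x 0 - Ac 0 0 := by
    intro x k
    refine inversion N (fun k => Ac x k - Ac 0 k) ?_ k 0
    intro d hd
    have h4 : ∑ kk : ZMod N, ee N (d * kk) * (Ac x kk - Ac 0 kk) = F x d - F 0 d := by
      rw [hF]
      simp only []
      rw [← Finset.sum_sub_distrib]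
      exact Finset.sum_congr rfl fun kk _ => by ring
    rw [h4, Fconst d hd x, sub_self]
  set z0 : Fin N := (zEquiv N).symm 0 with hz0
  refine ⟨(fun i => A i z0 - A z0 z0, fun k => A z0 k), ?_⟩
  ext i k
  show (A i z0 - A z0 z0) + A z0 k = A i k
  have h5 := gconst (zEquiv N i) (zEquiv N k)
  rw [hAc] at h5
  simp only [Equiv.symm_apply_apply] at h5
  rw [← hz0] at h5
  have h6 : ((A i k - A z0 k : ℝ) : ℂ) = ((A i z0 - A z0 z0 : ℝ) : ℂ) := by
    push_cast
    convert h5 using 2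
  have h7 : A i k - A z0 k = A i z0 - A z0 z0 := by exact_mod_cast h6
  linarith

noncomputable def XX (N d : ℕ) : Matrix (Fin N) (Fin N) ℝ :=
  Matrix.of fun j k =>
    (if d ∣ (j : ℕ) then (1 : ℝ) else 0) * Real.cos (2 * Real.pi * d * (k : ℕ) / N)

lemma XX_mem (N d : ℕ) [NeZero N] (hd2 : 2 ≤ d) (hdN : d < N) (hdvd : d ∣ N) :
    XX N d ∈ defectSubmodule (FourierMatrix N) := by
  haveI : NeZero d := ⟨by omega⟩
  rw [mem_iff]
  intro x y
  set δ : ZMod N := ((d : ℕ) : ZMod N) with hδ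
  have hδval : δ.val = d := by rw [hδ, ZMod.val_natCast, Nat.mod_eq_of_lt hdN]
  have h1 : ∀ k : ZMod N, ee N (δ * k)
      = Complex.exp (((d * k.val : ℕ) : ℂ) * (2 * Real.pi * Complex.I / N)) := by
    intro k
    have hcongr : ww N ^ ((δ * k).val) = ww N ^ (d * k.val) := by
      refine ww_pow_congr N (NeZero.ne N) ?_
      rw [ZMod.val_mul, hδval]
      exact Nat.mod_modEq _ N
    rw [ee, hcongr, ww, ← Complex.exp_nat_mul]
  have h2 : ∀ k : ZMod N, ee N (-(δ * k))
      = Complex.exp (-(((d * k.val : ℕ) : ℂ) * (2 * Real.pi * Complex.I / N))) := by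
    intro k
    rw [ee_neg, h1, ← Complex.exp_neg]
  have hcos : ∀ k : ZMod N, ((Real.cos (2 * Real.pi * d * k.val / N) : ℝ) : ℂ)
      = (ee N (δ * k) + ee N (-(δ * k))) / 2 := by
    intro k
    rw [h1, h2, Complex.ofReal_cos]
    have harg : ((d * k.val : ℕ) : ℂ) * (2 * Real.pi * Complex.I / N)
        = ((2 * Real.pi * d * k.val / N : ℝ) : ℂ) * Complex.I := by
      push_cast
      ring
    rw [harg, Complex.cos]
    ring
  have hXc : ∀ (x k : ZMod N), ((XX N d ((zEquiv N).symm x) ((zEquiv N).symm k) : ℝ) : ℂ)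
      = (((if d ∣ x.val then (1 : ℝ) else 0) : ℝ) : ℂ)
        * ((Real.cos (2 * Real.pi * d * k.val / N) : ℝ) : ℂ) := by
    intro x k
    have : XX N d ((zEquiv N).symm x) ((zEquiv N).symm k)
        = (if d ∣ x.val then (1 : ℝ) else 0) * Real.cos (2 * Real.pi * d * k.val / N) := rfl
    rw [this]
    push_cast
    ring
  set εx : ℝ := if d ∣ x.val then (1 : ℝ) else 0 with hεx
  set εy : ℝ := if d ∣ y.val then (1 : ℝ) else 0 with hεy
  have hterm : ∀ k : ZMod N, ee N ((x - y) * k)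
      * (((XX N d ((zEquiv N).symm x) ((zEquiv N).symm k) : ℝ) : ℂ)
        - ((XX N d ((zEquiv N).symm y) ((zEquiv N).symm k) : ℝ) : ℂ))
      = ((εx : ℂ) - (εy : ℂ)) * (ee N ((x - y + δ) * k) + ee N ((x - y - δ) * k)) / 2 := by
    intro k
    rw [hXc, hXc, hcos]
    have e1 : ee N ((x - y + δ) * k) = ee N ((x - y) * k) * ee N (δ * k) := by
      rw [← ee_add]; congr 1; ring
    have e2 : ee N ((x - y - δ) * k) = ee N ((x - y) * k) * ee N (-(δ * k)) := by
      rw [← ee_add]; congr 1; ring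
    rw [e1, e2]
    ring
  rw [Finset.sum_congr rfl (fun k _ => hterm k), ← Finset.sum_div, ← Finset.mul_sum,
    Finset.sum_add_distrib, sum_ee, sum_ee]
  -- congruence tool
  have hcast : ∀ z : ZMod N, ((z.val : ℕ) : ZMod d) = ZMod.castHom hdvd (ZMod d) z := by
    intro z
    rw [ZMod.castHom_apply, ZMod.natCast_val]
  have hiff : ∀ x y : ZMod N,
      ZMod.castHom hdvd (ZMod d) x = ZMod.castHom hdvd (ZMod d) y →
      ((d ∣ x.val) ↔ (d ∣ y.val)) := by
    intro x y hxy
    rw [← ZMod.natCast_eq_zero_iff, ← ZMod.natCast_eq_zero_iff,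
      hcast, hcast, hxy]
  have hδ0 : ZMod.castHom hdvd (ZMod d) δ = 0 := by
    rw [hδ, map_natCast, ZMod.natCast_self]
  by_cases hc1 : x - y + δ = 0
  · have hfx : ZMod.castHom hdvd (ZMod d) x = ZMod.castHom hdvd (ZMod d) y := by
      have := congrArg (ZMod.castHom hdvd (ZMod d)) hc1
      rw [map_add, map_sub, hδ0, map_zero] at this
      have h' : ZMod.castHom hdvd (ZMod d) x - ZMod.castHom hdvd (ZMod d) y = 0 := by
        rw [← add_zero (_ - _), this]
      exact sub_eq_zero.mp h'
    have : εx = εy := by rw [hεx, hεy, if_congr (hiff x y hfx) rfl rfl]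
    rw [this]
    ring
  · by_cases hc2 : x - y - δ = 0
    · have hfx : ZMod.castHom hdvd (ZMod d) x = ZMod.castHom hdvd (ZMod d) y := by
        have := congrArg (ZMod.castHom hdvd (ZMod d)) hc2
        rw [map_sub, map_sub, hδ0, map_zero, sub_zero] at this
        exact sub_eq_zero.mp this
      have : εx = εy := by rw [hεx, hεy, if_congr (hiff x y hfx) rfl rfl]
      rw [this]
      ring
    · rw [if_neg hc1, if_neg hc2]
      ring

lemma XX_not_mem (N d : ℕ) (hN2 : 2 ≤ N) (hd2 : 2 ≤ d) (hdN : d < N) :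
    XX N d ∉ TT N := by
  rintro ⟨p, hp⟩
  set i0 : Fin N := ⟨0, by omega⟩ with hi0
  set i1 : Fin N := ⟨1, by omega⟩ with hi1
  have key : ∀ k : Fin N, p.1 i0 + p.2 k = Real.cos (2 * Real.pi * d * (k : ℕ) / N) := by
    intro k
    have h := congrFun (congrFun hp i0) k
    have hXk : XX N d i0 k = Real.cos (2 * Real.pi * d * (k : ℕ) / N) := by
      show (if d ∣ ((i0 : Fin N) : ℕ) then (1:ℝ) else 0) * _ = _
      rw [if_pos (by rw [hi0]; exact Dvd.intro 0 rfl), one_mul]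
    rw [hXk] at h
    exact h
  have key1 : ∀ k : Fin N, p.1 i1 + p.2 k = 0 := by
    intro k
    have h := congrFun (congrFun hp i1) k
    have hXk : XX N d i1 k = 0 := by
      show (if d ∣ ((i1 : Fin N) : ℕ) then (1:ℝ) else 0) * _ = 0
      rw [if_neg, zero_mul]
      rw [hi1]
      show ¬ d ∣ 1
      rw [Nat.dvd_one]
      omega
    rw [hXk] at h
    exact h
  set k0 : Fin N := ⟨0, by omega⟩ with hk0
  set k1 : Fin N := ⟨1, by omega⟩ with hk1
  have a0 := key k0
  have a1 := key k1
  have b0 := key1 k0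
  have b1 := key1 k1
  have hcos0 : Real.cos (2 * Real.pi * d * ((k0 : Fin N) : ℕ) / N) = 1 := by
    rw [hk0]
    norm_num
  have hceq : Real.cos (2 * Real.pi * d * ((k1 : Fin N) : ℕ) / N) = 1 := by
    rw [← hcos0]
    linarith
  have hval1 : ((k1 : Fin N) : ℕ) = 1 := rfl
  rw [hval1] at hceq
  have hNpos : (0 : ℝ) < N := by positivity
  have hdR : (d : ℝ) < N := by exact_mod_cast hdN
  have hdpos : (0 : ℝ) < d := by positivity
  have hπ := Real.pi_pos
  have harg_pos : 0 < 2 * Real.pi * d * 1 / N := by positivity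
  have harg_lt : 2 * Real.pi * d * 1 / N < 2 * Real.pi := by
    rw [div_lt_iff₀ hNpos]
    nlinarith
  have := (Real.cos_eq_one_iff_of_lt_of_lt (by linarith) harg_lt).mp (by exact_mod_cast hceq)
  linarith

/-- for `N ≥ 2`, the Fourier matrix `F_N` has minimal defect `2N − 1`
if and only if `N` is prime. -/
theorem stmt_5 (N : ℕ) (hN : 2 ≤ N) :
    defect (FourierMatrix N) = 2 * N - 1 ↔ N.Prime := by
  haveI : NeZero N := ⟨by omega⟩
  constructor
  · intro hdef
    by_contra hnp
    set p : ℕ := N.minFac with hpdef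
    have hp : p.Prime := Nat.minFac_prime (by omega)
    have hpdvd : p ∣ N := Nat.minFac_dvd N
    have hpN : p ≠ N := fun h => hnp (h ▸ hp)
    have hpltN : p < N := lt_of_le_of_ne (Nat.le_of_dvd (by omega) hpdvd) hpN
    set d : ℕ := N / p with hddef
    have hdp : d * p = N := Nat.div_mul_cancel hpdvd
    have hd2 : 2 ≤ d := by
      rcases Nat.lt_or_ge d 2 with h | h
      · interval_cases d <;> omega
      · exact h
    have hdN : d < N := Nat.div_lt_self (by omega) hp.one_lt
    have hdvd : d ∣ N := Nat.div_dvd_of_dvd hpdvd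
    have hlt : TT N < defectSubmodule (FourierMatrix N) := by
      rw [SetLike.lt_iff_le_and_exists]
      exact ⟨TT_le N, XX N d, XX_mem N d hd2 hdN hdvd, XX_not_mem N d hN hd2 hdN⟩
    have hfr := Submodule.finrank_lt_finrank_of_lt hlt
    rw [finrank_TT] at hfr
    rw [defect] at hdef
    omega
  · intro hp
    have heq : defectSubmodule (FourierMatrix N) = TT N :=
      le_antisymm (S_le_TT N hp) (TT_le N)
    rw [defect, heq, finrank_TT]
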